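/- Let α ∈ (-1, 0) and let k be a positive integer. Define g_i(η) = η^{i + (1+α)/2} for i = 0, 1, …, k on [0,1]. Then the Gram matrices with respect to the L² inner product on [0,1] satisfy ⟨g_i, g_j⟩ = 1/(i + j + α + 2), and the best-approximation error det G(g_0, g_1, …, g_k)/det G(g_1, …, g_k) equals (α+2)·(∏_{j=1}^{k} j/(j+α+1))²·1/(k+α+2)². -/

import Mathlib

open Matrix

lemma key (a : ℝ) (ha : 0 < a) (n : ℕ) :
    (Matrix.of fun i j : Fin (n+1) => 1/((i:ℝ)+(j:ℝ)+a)).det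
      = (1/a) * (∏ i : Fin n, (((i:ℝ)+1)/(((i:ℝ)+1)+a)))^2
        * (Matrix.of fun i j : Fin n => 1/((i:ℝ)+(j:ℝ)+(a+2))).det := by
  have hpos : ∀ x : ℝ, 0 ≤ x → (0:ℝ) < x + a := fun x hx => by linarith
  set E : Matrix (Fin (n+1)) (Fin (n+1)) ℝ :=
    Matrix.of (fun i k : Fin (n+1) =>
      if k = i then (1:ℝ) else if k = 0 then a/((i:ℝ)+a) else 0) with hE
  set N : Matrix (Fin (n+1)) (Fin (n+1)) ℝ :=
    Matrix.of (fun i j : Fin (n+1) =>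
      if i = 0 then 1/((j:ℝ)+a)
      else ((i:ℝ)*(j:ℝ))/((((i:ℝ)+(j:ℝ)+a)*((i:ℝ)+a))*((j:ℝ)+a))) with hN
  have hMEN : (Matrix.of fun i j : Fin (n+1) => 1/((i:ℝ)+(j:ℝ)+a)) = E * N := by
    ext i j
    rw [Matrix.mul_apply]
    by_cases hi : i = 0
    · subst hi
      rw [Finset.sum_eq_single (0 : Fin (n+1))]
      · simp [hE, hN]
      · intro b _ hb; simp [hE, hN, hb]
      · simp
    · have hia : (0:ℝ) < (i:ℝ) + a := hpos _ (Nat.cast_nonneg _)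
      have hja : (0:ℝ) < (j:ℝ) + a := hpos _ (Nat.cast_nonneg _)
      have hija : (0:ℝ) < (i:ℝ) + (j:ℝ) + a := by
        have := Nat.cast_nonneg (α := ℝ) (i:ℕ); have := Nat.cast_nonneg (α := ℝ) (j:ℕ); linarith
      rw [Finset.sum_eq_add_of_mem i 0 (Finset.mem_univ _) (Finset.mem_univ _) hi
        (by intro c _ hc; simp [hE, hc.1, hc.2])]
      have h0i : (0 : Fin (n+1)) ≠ i := Ne.symm hi
      simp only [hE, hN, Matrix.of_apply, if_pos rfl, if_neg hi, if_neg h0i, Fin.val_zero,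
        Nat.cast_zero, if_true]
      field_simp
      ring
  have hdetE : E.det = 1 := by
    have ht : E.BlockTriangular OrderDual.toDual := by
      intro i j hij
      have hij' : i < j := hij
      have h1 : ¬ (j = i) := fun h => absurd h hij'.ne'
      have h2 : ¬ (j = 0) := fun h => by
        subst h; exact absurd hij' (by simp [Fin.le_zero_iff])
      simp [hE, h1, h2]
    rw [Matrix.det_of_lowerTriangular E ht]
    simp [hE]
  have hN0 : ∀ i : Fin (n+1), i ≠ 0 → N i 0 = 0 := by
    intro i hi; simp [hN, hi]
  have hdetN : N.det = (1/a) * (∏ i : Fin n, (((i:ℝ)+1)/(((i:ℝ)+1)+a)))^2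
      * (Matrix.of fun i j : Fin n => 1/((i:ℝ)+(j:ℝ)+(a+2))).det := by
    rw [Matrix.det_succ_column_zero]
    rw [Finset.sum_eq_single (0 : Fin (n+1))]
    · have hsub : (N.submatrix (Fin.succAbove 0) Fin.succ)
          = Matrix.of (fun i j : Fin n =>
              (((i:ℝ)+1)/(((i:ℝ)+1)+a)) * ((((j:ℝ)+1)/(((j:ℝ)+1)+a)) *
                (1/((i:ℝ)+(j:ℝ)+(a+2))))) := by
        ext i j
        have hia : (0:ℝ) < (i:ℝ) + 1 + a := by have := Nat.cast_nonneg (α := ℝ) (i:ℕ); linarith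
        have hja : (0:ℝ) < (j:ℝ) + 1 + a := by have := Nat.cast_nonneg (α := ℝ) (j:ℕ); linarith
        have hija : (0:ℝ) < (i:ℝ) + (j:ℝ) + (a+2) := by
          have := Nat.cast_nonneg (α := ℝ) (i:ℕ); have := Nat.cast_nonneg (α := ℝ) (j:ℕ); linarith
        have hs : (Fin.succ i : Fin (n+1)) ≠ 0 := Fin.succ_ne_zero i
        simp only [Matrix.submatrix_apply, Fin.succAbove_zero, hN, Matrix.of_apply, if_neg hs,
          Fin.val_succ, Nat.cast_add, Nat.cast_one]
        field_simp
        ring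
      erw [hsub, Matrix.det_mul_column]
      have h2 : (Matrix.det (Matrix.of fun i j : Fin n => (((j:ℝ)+1)/(((j:ℝ)+1)+a)) *
            (1/((i:ℝ)+(j:ℝ)+(a+2)))))
          = (∏ j : Fin n, (((j:ℝ)+1)/(((j:ℝ)+1)+a))) *
            (Matrix.of fun i j : Fin n => 1/((i:ℝ)+(j:ℝ)+(a+2))).det :=
        Matrix.det_mul_row _ _
      erw [h2]
      have hN00 : N 0 0 = 1/a := by simp [hN]
      erw [hN00]
      simp only [Fin.val_zero, pow_zero, one_mul]
      ring
    · intro b _ hb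
      rw [hN0 b hb]; ring
    · simp
  rw [hMEN, Matrix.det_mul, hdetE, hdetN, one_mul]

lemma nonzero (n : ℕ) : ∀ a : ℝ, 0 < a →
    (Matrix.of fun i j : Fin n => 1/((i:ℝ)+(j:ℝ)+a)).det ≠ 0 := by
  induction n with
  | zero => intro a _; rw [Matrix.det_fin_zero]; norm_num
  | succ n ih =>
    intro a ha
    rw [key a ha n]
    refine mul_ne_zero (mul_ne_zero (one_div_ne_zero ha.ne') (pow_ne_zero _ ?_))
      (ih (a+2) (by linarith))
    rw [Finset.prod_ne_zero_iff]
    intro i _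
    have h1 : (0:ℝ) < (i:ℝ) + 1 := by positivity
    have h2 : (0:ℝ) < (i:ℝ) + 1 + a := by linarith
    exact div_ne_zero h1.ne' h2.ne'

lemma prodid (α : ℝ) (hα : -1 < α) (k : ℕ) :
    (1/(α+2)) * (∏ i : Fin k, (((i:ℝ)+1)/(((i:ℝ)+1)+(α+2))))^2
      = (α+2) * (∏ j ∈ Finset.Icc 1 k, (j : ℝ)/((j:ℝ)+α+1))^2 * (1/((k:ℝ)+α+2)^2) := by
  have h3 : α + 2 ≠ 0 := by linarith
  induction k with
  | zero => simp; field_simp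
  | succ k ih =>
    rw [Fin.prod_univ_castSucc, Finset.prod_Icc_succ_top (Nat.le_add_left 1 k)]
    simp only [Fin.coe_castSucc, Fin.val_last]
    push_cast
    have h1 : (k:ℝ) + α + 2 ≠ 0 := by have := Nat.cast_nonneg (α := ℝ) k; intro h; linarith
    have h2 : (k:ℝ) + 1 + (α + 2) ≠ 0 := by have := Nat.cast_nonneg (α := ℝ) k; intro h; linarith
    have h4 : (k:ℝ) + 1 + α + 1 ≠ 0 := by have := Nat.cast_nonneg (α := ℝ) k; intro h; linarith
    have h5 : (k:ℝ) + 1 + α + 2 ≠ 0 := by have := Nat.cast_nonneg (α := ℝ) k; intro h; linarith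
    rw [show (1/(α+2)) * ((∏ i : Fin k, (((i:ℝ)+1)/(((i:ℝ)+1)+(α+2)))) *
          (((k:ℝ)+1)/(((k:ℝ)+1)+(α+2))))^2
        = ((1/(α+2)) * (∏ i : Fin k, (((i:ℝ)+1)/(((i:ℝ)+1)+(α+2))))^2) *
          (((k:ℝ)+1)/(((k:ℝ)+1)+(α+2)))^2 from by ring, ih]
    have hs : (1/(((k:ℝ)+α+2))^2) * (((k:ℝ)+1)/(((k:ℝ)+1)+(α+2)))^2
        = (((k:ℝ)+1)/((k:ℝ)+1+α+1))^2 * (1/(((k:ℝ)+1)+α+2)^2) := by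
      rw [show (k:ℝ)+1+α+1 = (k:ℝ)+α+2 from by ring,
        show (k:ℝ)+1+(α+2) = (k:ℝ)+1+α+2 from by ring]
      field_simp
    linear_combination ((α+2) * (∏ j ∈ Finset.Icc 1 k, (j : ℝ)/((j:ℝ)+α+1))^2) * hs

theorem stmt_17 (α : ℝ) (hα : α ∈ Set.Ioo (-1 : ℝ) 0) (k : ℕ) (hk : 1 ≤ k) :
    (∀ i j : Fin (k + 1),
        (∫ η in (0 : ℝ)..1,
            η ^ ((i : ℝ) + (1 + α) / 2) * η ^ ((j : ℝ) + (1 + α) / 2)) =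
          1 / ((i : ℝ) + (j : ℝ) + α + 2)) ∧
      (Matrix.det (Matrix.of fun i j : Fin (k + 1) => 1 / ((i : ℝ) + (j : ℝ) + α + 2))) /
          (Matrix.det (Matrix.of fun i j : Fin k =>
            1 / (((i : ℝ) + 1) + ((j : ℝ) + 1) + α + 2))) =
        (α + 2) * (∏ j ∈ Finset.Icc 1 k, (j : ℝ) / ((j : ℝ) + α + 1)) ^ 2 *
          (1 / ((k : ℝ) + α + 2) ^ 2) := by
  obtain ⟨hα1, hα2⟩ := hα
  constructor
  · intro i j
    have hr : (-1:ℝ) < (i:ℝ) + (1+α)/2 + ((j:ℝ) + (1+α)/2) := by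
      have := Nat.cast_nonneg (α := ℝ) (i:ℕ); have := Nat.cast_nonneg (α := ℝ) (j:ℕ); linarith
    have hcongr : Set.EqOn (fun η : ℝ => η ^ ((i:ℝ) + (1+α)/2) * η ^ ((j:ℝ) + (1+α)/2))
        (fun η : ℝ => η ^ ((i:ℝ) + (1+α)/2 + ((j:ℝ) + (1+α)/2))) (Set.uIcc (0:ℝ) 1) := by
      intro x hx
      rw [Set.uIcc_of_le (by norm_num : (0:ℝ) ≤ 1)] at hx
      exact (Real.rpow_add' hx.1 (by linarith)).symm
    rw [intervalIntegral.integral_congr hcongr, integral_rpow (Or.inl hr)]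
    rw [Real.one_rpow, Real.zero_rpow (by linarith)]
    rw [show (i:ℝ) + (1+α)/2 + ((j:ℝ) + (1+α)/2) + 1 = (i:ℝ) + (j:ℝ) + α + 2 from by ring]
    ring
  · have ha : (0:ℝ) < α + 2 := by linarith
    have hkey := key (α+2) ha k
    have hnum : (Matrix.of fun i j : Fin (k+1) => 1/((i:ℝ)+(j:ℝ)+α+2))
        = (Matrix.of fun i j : Fin (k+1) => 1/((i:ℝ)+(j:ℝ)+(α+2))) := by
      ext i j; simp only [Matrix.of_apply]; ring_nf
    have hden : (Matrix.of fun i j : Fin k => 1/(((i:ℝ)+1)+((j:ℝ)+1)+α+2))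
        = (Matrix.of fun i j : Fin k => 1/((i:ℝ)+(j:ℝ)+((α+2)+2))) := by
      ext i j; simp only [Matrix.of_apply]; ring_nf
    rw [hnum, hden, hkey]
    have hD := nonzero k ((α+2)+2) (by linarith)
    rw [mul_div_assoc, div_self hD, mul_one]
    exact prodid α hα1 k
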